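/- Let G ⊆ GL₂(Ẑ) be a closed subgroup, let ℓ be a prime number, and let β ≥ 0 be an integer. Identify GL₂(Ẑ) ≅ GL₂(ℤ_ℓ) × GL₂(ℤ_(ℓ)), where ℤ_(ℓ) = ∏_{p ≠ ℓ} ℤ_p. Assume that for every integer γ with β ≤ γ ≤ max{β, α_ℓ}, one has ker(GL₂(ℤ/ℓ^{γ+1}ℤ) → GL₂(ℤ/ℓ^γℤ)) × {1} ⊆ (π_{ℓ^∞,ℓ^{γ+1}} × id)(G), where π_{ℓ^∞,ℓ^{γ+1}} : GL₂(ℤ_ℓ) → GL₂(ℤ/ℓ^{γ+1}ℤ) is the reduction map and id is the identity on GL₂(ℤ_(ℓ)). Then ker(GL₂(ℤ_ℓ) → GL₂(ℤ/ℓ^βℤ)) × {1} ⊆ G. -/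

import Mathlib

open scoped MatrixGroups

/-- `α_ℓ`: 2 if ℓ = 2, else 1. -/
def alphaExp (ℓ : ℕ) : ℕ := if ℓ = 2 then 2 else 1

/-- The map `GL₂(R) → GL₂(S)` induced by a ring hom `R →+* S`. -/
abbrev glMap {R S : Type*} [CommRing R] [CommRing S] (f : R →+* S) :
    GL (Fin 2) R →* GL (Fin 2) S := Matrix.GeneralLinearGroup.map f

/-- `SL₂(R)` viewed as a subgroup of `GL₂(R)`. -/
def SL2subgroup (R : Type*) [CommRing R] : Subgroup (GL (Fin 2) R) :=
  (Matrix.SpecialLinearGroup.toGL (n := Fin 2) (R := R)).range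

/-- `Ẑ`, the profinite completion of `ℤ`, realized as the inverse limit of `ℤ/nℤ`. -/
def ZHat : Subring (∀ n : ℕ+, ZMod n) where
  carrier := {x | ∀ (d n : ℕ+) (h : (d : ℕ) ∣ (n : ℕ)),
    ZMod.castHom h (ZMod (d : ℕ)) (x n) = x d}
  mul_mem' {x y} hx hy := fun d n h => by
    simp only [Pi.mul_apply, map_mul, hx d n h, hy d n h]
  one_mem' := fun d n h => map_one (ZMod.castHom h (ZMod (d : ℕ)))
  add_mem' {x y} hx hy := fun d n h => by
    simp only [Pi.add_apply, map_add, hx d n h, hy d n h]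
  zero_mem' := fun d n h => map_zero (ZMod.castHom h (ZMod (d : ℕ)))
  neg_mem' {x} hx := fun d n h => by
    simp only [Pi.neg_apply, map_neg, hx d n h]

/-- Reduction `Ẑ → ℤ/mℤ`. -/
def ZHat.proj (m : ℕ+) : ZHat →+* ZMod (m : ℕ) :=
  (Pi.evalRingHom (fun n : ℕ+ => ZMod (n : ℕ)) m).comp (Subring.subtype ZHat)

/-- Reduction `GL₂(Ẑ) → GL₂(ℤ/mℤ)`. -/
abbrev GLred (m : ℕ+) : GL (Fin 2) ZHat →* GL (Fin 2) (ZMod (m : ℕ)) :=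
  glMap (ZHat.proj m)

/-- The canonical projection `Ẑ → ℤ_ℓ`. -/
def ZHat.toPadicInt (ℓ : ℕ) [Fact ℓ.Prime] : ZHat →+* ℤ_[ℓ] :=
  PadicInt.lift (f := fun n => ZHat.proj ⟨ℓ ^ n, pow_pos (Nat.Prime.pos Fact.out) n⟩)
    (fun k1 k2 hk => RingHom.ext fun x =>
      x.2 ⟨ℓ ^ k1, pow_pos (Nat.Prime.pos Fact.out) k1⟩
        ⟨ℓ ^ k2, pow_pos (Nat.Prime.pos Fact.out) k2⟩ (pow_dvd_pow ℓ hk))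

/-- `ℤ_(ℓ) = ∏_{p ≠ ℓ} ℤ_p`, realized as the inverse limit of `ℤ/nℤ` over `n` coprime to `ℓ`. -/
def ZHatAway (ℓ : ℕ) : Subring (∀ n : {n : ℕ+ // ¬ (ℓ ∣ (n : ℕ))}, ZMod ((n : ℕ+) : ℕ)) where
  carrier := {x | ∀ (d n : {n : ℕ+ // ¬ (ℓ ∣ (n : ℕ))}) (h : ((d : ℕ+) : ℕ) ∣ ((n : ℕ+) : ℕ)),
    ZMod.castHom h (ZMod ((d : ℕ+) : ℕ)) (x n) = x d}
  mul_mem' {x y} hx hy := fun d n h => by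
    simp only [Pi.mul_apply, map_mul, hx d n h, hy d n h]
  one_mem' := fun d n h => map_one (ZMod.castHom h (ZMod ((d : ℕ+) : ℕ)))
  add_mem' {x y} hx hy := fun d n h => by
    simp only [Pi.add_apply, map_add, hx d n h, hy d n h]
  zero_mem' := fun d n h => map_zero (ZMod.castHom h (ZMod ((d : ℕ+) : ℕ)))
  neg_mem' {x} hx := fun d n h => by
    simp only [Pi.neg_apply, map_neg, hx d n h]

/-- The canonical projection `Ẑ → ℤ_(ℓ)`. -/
def ZHat.away (ℓ : ℕ) : ZHat →+* ZHatAway ℓ where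
  toFun x := ⟨fun n => x.1 n.1, fun d n h => x.2 d.1 n.1 h⟩
  map_one' := rfl
  map_mul' _ _ := rfl
  map_zero' := rfl
  map_add' _ _ := rfl

/-- The radical of a natural number. -/
def radical (n : ℕ) : ℕ := ∏ p ∈ n.primeFactors, p

/-- The modified radical `rad'`. -/
def radical' (n : ℕ) : ℕ := if 4 ∣ n then 2 * radical n else radical n

lemma radical_pos (n : ℕ) : 0 < radical n :=
  Finset.prod_pos fun p hp => (Nat.prime_of_mem_primeFactors hp).pos

lemma radical'_pos (n : ℕ) : 0 < radical' n := by
  unfold radical'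
  split
  · exact Nat.mul_pos two_pos (radical_pos n)
  · exact radical_pos n

lemma radical_dvd (n : ℕ) : radical n ∣ n := Nat.prod_primeFactors_dvd n

lemma radical'_dvd (n : ℕ) : radical' n ∣ n := by
  unfold radical'
  split
  case isTrue h4 =>
    rcases Nat.eq_zero_or_pos n with rfl | hn
    · exact Dvd.intro 0 rfl
    · have h2 : 2 ∈ n.primeFactors :=
        Nat.mem_primeFactors.mpr ⟨Nat.prime_two, dvd_trans ⟨2, rfl⟩ h4, hn.ne'⟩
      set P : ℕ := ∏ p ∈ n.primeFactors.erase 2, p with hP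
      have hrad : radical n = 2 * P := by
        rw [radical, ← Finset.mul_prod_erase _ _ h2]
      have hPdvd : P ∣ n := by
        refine dvd_trans ?_ (radical_dvd n)
        exact Finset.prod_dvd_prod_of_subset _ _ _ (Finset.erase_subset _ _)
      have hPodd : ¬ (2 ∣ P) := by
        intro hdvd
        obtain ⟨p, hp, hpdvd⟩ :=
          (Nat.Prime.prime Nat.prime_two).exists_mem_finset_dvd hdvd
        have hpp := Nat.prime_of_mem_primeFactors (Finset.mem_of_mem_erase hp)
        have : p = 2 := ((Nat.prime_dvd_prime_iff_eq Nat.prime_two hpp).mp hpdvd).symm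
        exact (Finset.ne_of_mem_erase hp) this
      have hcop : Nat.Coprime 4 P := by
        have : Nat.Coprime 2 P := (Nat.Prime.coprime_iff_not_dvd Nat.prime_two).mpr hPodd
        have h4eq : (4 : ℕ) = 2 ^ 2 := by norm_num
        rw [h4eq]
        exact Nat.Coprime.pow_left 2 this
      have : 4 * P ∣ n := hcop.mul_dvd_of_dvd_of_dvd h4 hPdvd
      calc 2 * radical n = 4 * P := by rw [hrad]; ring
        _ ∣ n := this
  case isFalse => exact radical_dvd n

open Topology Filter in
lemma ZHat.exists_pnat_subset_nhds (z : ZHat) {W : Set ZHat} (hW : W ∈ nhds z) :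
    ∃ N : ℕ+, {x : ZHat | x.1 N = z.1 N} ⊆ W := by
  rw [nhds_subtype] at hW
  obtain ⟨V, hV, hVW⟩ := hW
  rw [nhds_pi, Filter.mem_pi] at hV
  obtain ⟨I, hIfin, t, ht, hsub⟩ := hV
  refine ⟨∏ i ∈ hIfin.toFinset, i, fun x hx => ?_⟩
  apply hVW
  refine hsub (Set.mem_pi.mpr fun i hi => ?_)
  have hdvd : (i : ℕ) ∣ ((∏ j ∈ hIfin.toFinset, j : ℕ+) : ℕ) :=
    PNat.dvd_iff.mp (Finset.dvd_prod_of_mem _ (hIfin.mem_toFinset.mpr hi))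
  have h1 := x.2 i _ hdvd
  have h2 := z.2 i _ hdvd
  simp only [Set.mem_setOf_eq] at hx
  have hxz : x.1 i = z.1 i := by rw [← h1, ← h2, hx]
  exact hxz ▸ mem_of_mem_nhds (ht i)
lemma ZHat.entry_congr {x y : ZHat} {d n : ℕ+} (hdvd : (d:ℕ) ∣ (n:ℕ))
    (h : x.1 n = y.1 n) : x.1 d = y.1 d := by
  rw [← x.2 d n hdvd, ← y.2 d n hdvd, h]

open Topology Filter in
lemma matrix_exists_pnat_subset_nhds (a : Matrix (Fin 2) (Fin 2) ZHat)
    {W : Set (Matrix (Fin 2) (Fin 2) ZHat)} (hW : W ∈ nhds a) :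
    ∃ N : ℕ+, {x : Matrix (Fin 2) (Fin 2) ZHat | ∀ i j, (x i j).1 N = (a i j).1 N} ⊆ W := by
  replace hW : {x : Fin 2 → Fin 2 → ZHat | Matrix.of x ∈ W} ∈ @nhds (Fin 2 → Fin 2 → ZHat) _ (fun i j => a i j) := hW
  rw [nhds_pi, Filter.mem_pi] at hW
  obtain ⟨I, hI, t, ht, hsub⟩ := hW
  have H : ∀ i : Fin 2, ∃ N : ℕ+, {y : Fin 2 → ZHat | ∀ j, (y j).1 N = (a i j).1 N} ⊆ t i := by
    intro i
    have hti := ht i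
    rw [nhds_pi, Filter.mem_pi] at hti
    obtain ⟨J, hJ, s, hs, hsub'⟩ := hti
    choose Nf hNf using fun j => ZHat.exists_pnat_subset_nhds (a i j) (hs j)
    refine ⟨∏ j : Fin 2, Nf j, fun y hy => hsub' (Set.mem_pi.mpr fun j _ => ?_)⟩
    refine hNf j ?_
    have hdvd : ((Nf j : ℕ+) : ℕ) ∣ ((∏ k : Fin 2, Nf k : ℕ+) : ℕ) :=
      PNat.dvd_iff.mp (Finset.dvd_prod_of_mem _ (Finset.mem_univ j))
    exact ZHat.entry_congr hdvd (hy j)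
  choose Ng hNg using H
  refine ⟨∏ i : Fin 2, Ng i, fun x hx => hsub (Set.mem_pi.mpr fun i _ => ?_)⟩
  refine hNg i fun j => ?_
  have hdvd : ((Ng i : ℕ+) : ℕ) ∣ ((∏ k : Fin 2, Ng k : ℕ+) : ℕ) :=
    PNat.dvd_iff.mp (Finset.dvd_prod_of_mem _ (Finset.mem_univ i))
  exact ZHat.entry_congr hdvd (hx i j)

open Topology Filter MulOpposite in
lemma GL_exists_pnat_subset_nhds (g : GL (Fin 2) ZHat) {U : Set (GL (Fin 2) ZHat)}
    (hU : U ∈ nhds g) :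
    ∃ N : ℕ+, {x : GL (Fin 2) ZHat | GLred N x = GLred N g} ⊆ U := by
  rw [Units.isInducing_embedProduct.nhds_eq_comap, Filter.mem_comap] at hU
  obtain ⟨V, hV, hVU⟩ := hU
  rw [nhds_prod_eq, Filter.mem_prod_iff] at hV
  obtain ⟨V1, hV1, V2, hV2, hV12⟩ := hV
  have hV2' : V2 ∈ nhds (MulOpposite.op (((g⁻¹ : GL (Fin 2) ZHat)) : Matrix (Fin 2) (Fin 2) ZHat)) := hV2
  rw [← MulOpposite.map_op_nhds, Filter.mem_map] at hV2'
  obtain ⟨N1, hN1⟩ := matrix_exists_pnat_subset_nhds _ hV1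
  obtain ⟨N2, hN2⟩ := matrix_exists_pnat_subset_nhds _ hV2'
  refine ⟨N1 * N2, fun x hx => ?_⟩
  simp only [Set.mem_setOf_eq] at hx
  have hxinv : GLred (N1 * N2) x⁻¹ = GLred (N1 * N2) g⁻¹ := by
    rw [map_inv, map_inv, hx]
  have hval : ∀ i j, ((x : Matrix (Fin 2) (Fin 2) ZHat) i j).1 (N1 * N2)
      = ((g : Matrix (Fin 2) (Fin 2) ZHat) i j).1 (N1 * N2) := by
    intro i j
    exact congrArg (fun u : GL (Fin 2) (ZMod ((N1*N2 : ℕ+) : ℕ)) =>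
      (u : Matrix (Fin 2) (Fin 2) (ZMod ((N1*N2 : ℕ+) : ℕ))) i j) hx
  have hvalinv : ∀ i j, ((((x⁻¹ : GL (Fin 2) ZHat) : Matrix (Fin 2) (Fin 2) ZHat)) i j).1 (N1 * N2) = (((g⁻¹ : GL (Fin 2) ZHat) : Matrix (Fin 2) (Fin 2) ZHat) i j).1 (N1 * N2) := by
    intro i j
    exact congrArg (fun u : GL (Fin 2) (ZMod ((N1*N2 : ℕ+) : ℕ)) =>
      (u : Matrix (Fin 2) (Fin 2) (ZMod ((N1*N2 : ℕ+) : ℕ))) i j) hxinv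
  apply hVU
  apply hV12
  constructor
  · exact hN1 fun i j => ZHat.entry_congr (PNat.dvd_iff.mp (dvd_mul_right N1 N2)) (hval i j)
  · show op _ ∈ V2
    exact hN2 fun i j => ZHat.entry_congr (PNat.dvd_iff.mp (dvd_mul_left N2 N1)) (hvalinv i j)
lemma mem_of_GLred (G : Subgroup (GL (Fin 2) ZHat)) (hG : IsClosed (G : Set (GL (Fin 2) ZHat)))
    (g : GL (Fin 2) ZHat) (h : ∀ N : ℕ+, ∃ g' ∈ G, GLred N g' = GLred N g) : g ∈ G := by
  have hmem : g ∈ closure (G : Set (GL (Fin 2) ZHat)) := by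
    rw [mem_closure_iff_nhds]
    intro U hU
    obtain ⟨N, hN⟩ := GL_exists_pnat_subset_nhds g hU
    obtain ⟨g', hg', hred⟩ := h N
    exact ⟨g', hN hred, hg'⟩
  rwa [hG.closure_eq] at hmem

lemma proj_comp_castHom (d n : ℕ+) (h : (d:ℕ) ∣ (n:ℕ)) :
    (ZMod.castHom h (ZMod (d:ℕ))).comp (ZHat.proj n) = ZHat.proj d :=
  RingHom.ext fun x => x.2 d n h

lemma GLred_comp_castHom (d n : ℕ+) (h : (d:ℕ) ∣ (n:ℕ)) (x : GL (Fin 2) ZHat) :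
    glMap (ZMod.castHom h (ZMod (d:ℕ))) (GLred n x) = GLred d x := by
  rw [← MonoidHom.comp_apply, ← Matrix.GeneralLinearGroup.map_comp, proj_comp_castHom]

lemma glMap_injective {R S : Type*} [CommRing R] [CommRing S] {f : R →+* S}
    (hf : Function.Injective f) : Function.Injective (glMap f) := by
  intro x y hxy
  have hval : (glMap f x).val = (glMap f y).val := congrArg Units.val hxy
  refine Units.ext (Matrix.ext fun i j => hf ?_)
  have := Matrix.ext_iff.mpr hval i j
  rw [Matrix.GeneralLinearGroup.map_apply, Matrix.GeneralLinearGroup.map_apply] at this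
  exact this

lemma zmod_pair_inj {a b : ℕ} (ha : 0 < a) (hb : 0 < b) (hab : Nat.Coprime a b)
    {x y : ZMod (a*b)}
    (h1 : ZMod.castHom (dvd_mul_right a b) (ZMod a) x = ZMod.castHom (dvd_mul_right a b) (ZMod a) y)
    (h2 : ZMod.castHom (dvd_mul_left b a) (ZMod b) x = ZMod.castHom (dvd_mul_left b a) (ZMod b) y) :
    x = y := by
  haveI : NeZero (a*b) := ⟨(Nat.mul_pos ha hb).ne'⟩
  haveI : NeZero a := ⟨ha.ne'⟩
  haveI : NeZero b := ⟨hb.ne'⟩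
  have key : ∀ (c : ℕ) (hc : NeZero c) (hdvd : c ∣ a * b) (d : ZMod (a*b)),
      ZMod.castHom hdvd (ZMod c) d = 0 → c ∣ d.val := by
    intro c hc hdvd d hd
    rw [ZMod.castHom_apply, ← ZMod.natCast_val] at hd
    exact (ZMod.natCast_eq_zero_iff _ _).mp hd
  have hsub1 : ZMod.castHom (dvd_mul_right a b) (ZMod a) (x - y) = 0 := by
    rw [map_sub, h1, sub_self]
  have hsub2 : ZMod.castHom (dvd_mul_left b a) (ZMod b) (x - y) = 0 := by
    rw [map_sub, h2, sub_self]
  have hdvd : a * b ∣ (x - y).val :=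
    hab.mul_dvd_of_dvd_of_dvd (key a ‹_› _ _ hsub1) (key b ‹_› _ _ hsub2)
  have hval : (x - y).val = 0 := Nat.eq_zero_of_dvd_of_lt hdvd (ZMod.val_lt _)
  exact sub_eq_zero.mp ((ZMod.val_eq_zero _).mp hval)
lemma zmod_pow_ker {ℓ e : ℕ} (hℓ : 0 < ℓ) {x : ZMod (ℓ^(e+1))}
    (hx : ZMod.castHom (pow_dvd_pow ℓ (Nat.le_succ e)) (ZMod (ℓ^e)) x = 0) :
    ∃ c : ZMod (ℓ^(e+1)), x = (ℓ : ZMod (ℓ^(e+1)))^e * c := by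
  haveI : NeZero (ℓ^(e+1)) := ⟨(pow_pos hℓ _).ne'⟩
  rw [ZMod.castHom_apply, ← ZMod.natCast_val] at hx
  obtain ⟨c, hc⟩ := (ZMod.natCast_eq_zero_iff _ _).mp hx
  refine ⟨(c : ZMod (ℓ^(e+1))), ?_⟩
  have hxv : ((x.val : ℕ) : ZMod (ℓ^(e+1))) = x := ZMod.natCast_rightInverse x
  rw [← hxv, hc]
  push_cast
  ring

lemma choose_pow_dvd {ℓ : ℕ} (hℓ : ℓ.Prime) {f j : ℕ} (hf : alphaExp ℓ ≤ f)
    (h2 : 2 ≤ j) (hj : j ≤ ℓ) : ℓ^(f+2) ∣ ℓ.choose j * ℓ^(f*j) := by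
  have hf1 : 1 ≤ f := le_trans (by unfold alphaExp; split <;> omega) hf
  rcases eq_or_lt_of_le hj with rfl | hjlt
  · rw [Nat.choose_self, one_mul]
    apply pow_dvd_pow
    rcases Nat.lt_or_ge j 3 with hl2 | hl3
    · have hj2 : j = 2 := by omega
      subst hj2
      have : alphaExp 2 = 2 := by unfold alphaExp; norm_num
      have hf2 : 2 ≤ f := this ▸ hf
      nlinarith
    · nlinarith
  · have h1 : ℓ ∣ ℓ.choose j := hℓ.dvd_choose_self (by omega) hjlt
    have h2' : ℓ^(f+1) ∣ ℓ^(f*j) := pow_dvd_pow ℓ (by nlinarith)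
    obtain ⟨u, hu⟩ := h1
    obtain ⟨v, hv⟩ := h2'
    exact ⟨u * v, by rw [hu, hv]; ring⟩

lemma key_pow {ℓ f : ℕ} (hℓ : ℓ.Prime) (hf : alphaExp ℓ ≤ f)
    (D : Matrix (Fin 2) (Fin 2) (ZMod (ℓ^(f+2)))) :
    (1 + (ℓ : ZMod (ℓ^(f+2)))^f • D)^ℓ = 1 + (ℓ : ZMod (ℓ^(f+2)))^(f+1) • D := by
  have hf1 : 1 ≤ f := le_trans (by unfold alphaExp; split <;> omega) hf
  have hℓ2 : 2 ≤ ℓ := hℓ.two_le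
  have hcomm : Commute (((ℓ : ZMod (ℓ^(f+2)))^f • D : Matrix (Fin 2) (Fin 2) (ZMod (ℓ^(f+2))))) 1 := Commute.one_right _
  rw [add_comm (1 : Matrix (Fin 2) (Fin 2) (ZMod (ℓ^(f+2)))) ((ℓ : ZMod (ℓ^(f+2)))^f • D), hcomm.add_pow]
  have hsplit : Finset.range (ℓ+1) = Finset.Ico 0 2 ∪ Finset.Ico 2 (ℓ+1) := by
    rw [Finset.range_eq_Ico, ← Finset.Ico_union_Ico_eq_Ico (show (0:ℕ) ≤ 2 by omega) (show 2 ≤ ℓ+1 by omega)]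
  rw [hsplit, Finset.sum_union (Finset.Ico_disjoint_Ico_consecutive 0 2 (ℓ+1))]
  have hzero : ∀ m ∈ Finset.Ico 2 (ℓ+1),
      ((ℓ : ZMod (ℓ^(f+2)))^f • D)^m * 1^(ℓ-m) * ((ℓ.choose m : ℕ) : Matrix (Fin 2) (Fin 2) (ZMod (ℓ^(f+2)))) = 0 := by
    intro m hm
    obtain ⟨hm2, hmℓ⟩ := Finset.mem_Ico.mp hm
    have hcast : ((ℓ.choose m : ℕ) : Matrix (Fin 2) (Fin 2) (ZMod (ℓ^(f+2)))) = (ℓ.choose m) • (1 : Matrix (Fin 2) (Fin 2) (ZMod (ℓ^(f+2)))) := by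
      rw [nsmul_eq_mul, mul_one]
    rw [one_pow, mul_one, hcast, smul_pow, smul_mul_assoc, mul_smul_comm, mul_one,
      ← Nat.cast_smul_eq_nsmul (ZMod (ℓ^(f+2))), smul_smul]
    have hscalar : ((ℓ : ZMod (ℓ^(f+2)))^f)^m * ((ℓ.choose m : ℕ) : (ZMod (ℓ^(f+2)))) = 0 := by
      rw [← pow_mul]
      have : ((ℓ : ZMod (ℓ^(f+2)))^(f*m)) * ((ℓ.choose m : ℕ) : (ZMod (ℓ^(f+2)))) = ((ℓ^(f*m) * ℓ.choose m : ℕ) : (ZMod (ℓ^(f+2)))) := by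
        push_cast; ring
      rw [this]
      rw [ZMod.natCast_eq_zero_iff]
      have := choose_pow_dvd hℓ hf hm2 (by omega)
      calc ℓ^(f+2) ∣ ℓ.choose m * ℓ^(f*m) := this
        _ = ℓ^(f*m) * ℓ.choose m := by ring
    rw [hscalar, zero_smul]
  rw [Finset.sum_eq_zero hzero, add_zero]
  have h01 : Finset.Ico 0 2 = {0, 1} := by decide
  rw [h01, Finset.sum_insert (by decide), Finset.sum_singleton]
  rw [pow_zero, pow_one, Nat.choose_zero_right, Nat.choose_one_right]
  have hterm1 : ((ℓ : ZMod (ℓ^(f+2)))^f • D) * 1^(ℓ-1) * ((ℓ : ℕ) : Matrix (Fin 2) (Fin 2) (ZMod (ℓ^(f+2)))) = (ℓ : (ZMod (ℓ^(f+2))))^(f+1) • D := by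
    rw [one_pow, mul_one]
    have hcast : ((ℓ : ℕ) : Matrix (Fin 2) (Fin 2) (ZMod (ℓ^(f+2)))) = ℓ • (1 : Matrix (Fin 2) (Fin 2) (ZMod (ℓ^(f+2)))) := by
      rw [nsmul_eq_mul, mul_one]
    rw [hcast, smul_mul_assoc, mul_smul_comm, mul_one, ← Nat.cast_smul_eq_nsmul (ZMod (ℓ^(f+2))), smul_smul,
      ← pow_succ]
  rw [hterm1, one_mul, Nat.cast_one, mul_one, one_pow]
/-- `ℓ^e` as a positive natural number. -/
def Pp (ℓ : ℕ) [Fact ℓ.Prime] (e : ℕ) : ℕ+ :=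
  ⟨ℓ^e, pow_pos (Nat.Prime.pos Fact.out) e⟩

lemma isUnit_one_add_pow_smul {ℓ : ℕ} (hℓ : ℓ.Prime) {k f : ℕ} (hf : 1 ≤ f) (hk : 1 ≤ k)
    (A : Matrix (Fin 2) (Fin 2) (ZMod (ℓ^k))) :
    IsUnit (Matrix.det (1 + (ℓ : ZMod (ℓ^k))^f • A)) := by
  haveI : Fact ℓ.Prime := ⟨hℓ⟩
  haveI : NeZero (ℓ^k) := ⟨(pow_pos hℓ.pos _).ne'⟩
  have hdvd : ℓ ∣ ℓ^k := dvd_pow_self ℓ (by omega)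
  set M : Matrix (Fin 2) (Fin 2) (ZMod (ℓ^k)) := 1 + (ℓ : ZMod (ℓ^k))^f • A with hM
  have hmap : (RingHom.mapMatrix (ZMod.castHom hdvd (ZMod ℓ)))
      (1 + (ℓ : ZMod (ℓ^k))^f • A) = 1 := by
    rw [map_add, map_one]
    have h1 : (ℓ : ZMod (ℓ^k))^f • A = (ℓ^f : ℕ) • A := by
      rw [← Nat.cast_smul_eq_nsmul (ZMod (ℓ^k))]; push_cast; rfl
    rw [h1, map_nsmul]
    have h2 : (ℓ^f : ℕ) • ((RingHom.mapMatrix (ZMod.castHom hdvd (ZMod ℓ))) A)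
        = ((ℓ^f : ℕ) : ZMod ℓ) • ((RingHom.mapMatrix (ZMod.castHom hdvd (ZMod ℓ))) A) := by
      rw [Nat.cast_smul_eq_nsmul]
    rw [h2]
    have h3 : ((ℓ^f : ℕ) : ZMod ℓ) = 0 := by
      rw [ZMod.natCast_eq_zero_iff]
      exact dvd_pow_self ℓ (by omega)
    rw [h3, zero_smul, add_zero]
  have hdet1 : ZMod.castHom hdvd (ZMod ℓ) (Matrix.det M) = 1 := by
    rw [RingHom.map_det, hM, hmap, Matrix.det_one]
  -- now deduce unit
  set d := Matrix.det M with hd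
  have hval : ((d.val : ℕ) : ZMod (ℓ^k)) = d := ZMod.natCast_rightInverse d
  have hnotdvd : ¬ ℓ ∣ d.val := by
    intro hdvd'
    have : ZMod.castHom hdvd (ZMod ℓ) d = 0 := by
      rw [ZMod.castHom_apply, ← ZMod.natCast_val, (ZMod.natCast_eq_zero_iff _ _).mpr hdvd']
    rw [hdet1] at this
    exact one_ne_zero this
  have hcop : Nat.Coprime d.val (ℓ^k) :=
    Nat.Coprime.pow_right k ((Nat.Prime.coprime_iff_not_dvd hℓ).mpr hnotdvd).symm
  have := (ZMod.isUnit_iff_coprime d.val (ℓ^k)).mpr hcop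
  rwa [hval] at this

lemma GLred_away_eq_one {ℓ : ℕ} [Fact ℓ.Prime] (m : ℕ+) (hm : ¬ (ℓ ∣ (m:ℕ)))
    {g : GL (Fin 2) ZHat} (h : glMap (ZHat.away ℓ) g = 1) : GLred m g = 1 := by
  have hcomp : ((Pi.evalRingHom (fun n : {n : ℕ+ // ¬ (ℓ ∣ (n : ℕ))} => ZMod ((n : ℕ+) : ℕ))
      (⟨m, hm⟩ : {n : ℕ+ // ¬ (ℓ ∣ (n : ℕ))})).comp
      (Subring.subtype (ZHatAway ℓ))).comp (ZHat.away ℓ) = ZHat.proj m :=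
    RingHom.ext fun x => rfl
  calc GLred m g = glMap (((Pi.evalRingHom (fun n : {n : ℕ+ // ¬ (ℓ ∣ (n : ℕ))} =>
        ZMod ((n : ℕ+) : ℕ)) ⟨m, hm⟩).comp (Subring.subtype (ZHatAway ℓ))).comp (ZHat.away ℓ)) g := by
        rw [hcomp]
    _ = glMap ((Pi.evalRingHom (fun n : {n : ℕ+ // ¬ (ℓ ∣ (n : ℕ))} =>
        ZMod ((n : ℕ+) : ℕ)) ⟨m, hm⟩).comp (Subring.subtype (ZHatAway ℓ)))
        (glMap (ZHat.away ℓ) g) := by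
        rfl
    _ = 1 := by rw [h, map_one]

lemma padic_proj_eq {ℓ : ℕ} [Fact ℓ.Prime] (γ : ℕ) :
    (PadicInt.toZModPow (p := ℓ) γ).comp (ZHat.toPadicInt ℓ) = ZHat.proj (Pp ℓ γ) :=
  PadicInt.lift_spec _ γ

lemma glMap_padic_proj {ℓ : ℕ} [Fact ℓ.Prime] (γ : ℕ) (g : GL (Fin 2) ZHat) :
    glMap ((PadicInt.toZModPow (p := ℓ) γ).comp (ZHat.toPadicInt ℓ)) g
      = glMap (ZHat.proj (Pp ℓ γ)) g := by rw [padic_proj_eq]; rfl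
lemma mapMatrix_pow_smul {a b : ℕ} (h : b ∣ a) (ℓ j : ℕ) (B : Matrix (Fin 2) (Fin 2) (ZMod a)) :
    (RingHom.mapMatrix (ZMod.castHom h (ZMod b))) ((ℓ : ZMod a)^j • B)
      = (ℓ : ZMod b)^j • (RingHom.mapMatrix (ZMod.castHom h (ZMod b))) B := by
  have h1 : (ℓ : ZMod a)^j • B = (ℓ^j : ℕ) • B := by
    rw [← Nat.cast_smul_eq_nsmul (ZMod a)]; push_cast; rfl
  have h2 : (ℓ^j : ℕ) • (RingHom.mapMatrix (ZMod.castHom h (ZMod b))) B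
      = (ℓ : ZMod b)^j • (RingHom.mapMatrix (ZMod.castHom h (ZMod b))) B := by
    rw [← Nat.cast_smul_eq_nsmul (ZMod b)]; push_cast; rfl
  rw [h1, map_nsmul, h2]

lemma pow_smul_eq_zero {ℓ b j : ℕ} (hb : b ≤ j) (B : Matrix (Fin 2) (Fin 2) (ZMod (ℓ^b))) :
    (ℓ : ZMod (ℓ^b))^j • B = 0 := by
  have h1 : (ℓ : ZMod (ℓ^b))^j = ((ℓ^j : ℕ) : ZMod (ℓ^b)) := by push_cast; rfl
  have h2 : ((ℓ^j : ℕ) : ZMod (ℓ^b)) = 0 := by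
    rw [ZMod.natCast_eq_zero_iff]
    exact pow_dvd_pow ℓ hb
  rw [h1, h2, zero_smul]

theorem layer_all (ℓ : ℕ) [Fact ℓ.Prime] (G : Subgroup (GL (Fin 2) ZHat)) (β : ℕ)
    (h0 : ∀ e : ℕ, β ≤ e → e ≤ max β (alphaExp ℓ) → ∀ k : GL (Fin 2) (ZMod (ℓ^(e+1))),
        glMap (ZMod.castHom (pow_dvd_pow ℓ (Nat.le_succ e)) (ZMod (ℓ^e))) k = 1 →
        ∃ g ∈ G, glMap (ZHat.proj (Pp ℓ (e+1))) g = k ∧ glMap (ZHat.away ℓ) g = 1) :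
    ∀ e : ℕ, β ≤ e → ∀ k : GL (Fin 2) (ZMod (ℓ^(e+1))),
        glMap (ZMod.castHom (pow_dvd_pow ℓ (Nat.le_succ e)) (ZMod (ℓ^e))) k = 1 →
        ∃ g ∈ G, glMap (ZHat.proj (Pp ℓ (e+1))) g = k ∧ glMap (ZHat.away ℓ) g = 1 := by
  intro e
  induction e using Nat.strong_induction_on with
  | _ e IH =>
  intro hβe k hk
  by_cases hcase : e ≤ max β (alphaExp ℓ)
  · exact h0 e hβe hcase k hk
  push_neg at hcase
  obtain ⟨f, rfl⟩ : ∃ f, e = f + 1 := ⟨e - 1, by omega⟩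
  have hℓp : ℓ.Prime := Fact.out
  have hfα : alphaExp ℓ ≤ f := by have := le_max_right β (alphaExp ℓ); omega
  have hfβ : β ≤ f := by have := le_max_left β (alphaExp ℓ); omega
  have hf1 : 1 ≤ f := le_trans (by unfold alphaExp; split <;> omega) hfα
  -- k.val = 1 + ℓ^(f+1) • A
  have hkval : (RingHom.mapMatrix (ZMod.castHom (pow_dvd_pow ℓ (Nat.le_succ (f+1)))
      (ZMod (ℓ^(f+1))))) k.val = 1 := congrArg Units.val hk
  have hker : ∀ i j, ∃ c, (k.val - 1) i j = (ℓ : ZMod (ℓ^(f+1+1)))^(f+1) * c := by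
    intro i j
    apply zmod_pow_ker hℓp.pos
    have hmap0 : (RingHom.mapMatrix (ZMod.castHom (pow_dvd_pow ℓ (Nat.le_succ (f+1)))
        (ZMod (ℓ^(f+1))))) (k.val - 1) = 0 := by
      rw [map_sub, hkval, map_one, sub_self]
    calc ZMod.castHom (pow_dvd_pow ℓ (Nat.le_succ (f+1))) (ZMod (ℓ^(f+1))) ((k.val - 1) i j)
        = (RingHom.mapMatrix (ZMod.castHom (pow_dvd_pow ℓ (Nat.le_succ (f+1)))
          (ZMod (ℓ^(f+1)))) (k.val - 1)) i j := rfl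
      _ = 0 := by rw [hmap0]; rfl
  choose A0 hA using hker
  set A : Matrix (Fin 2) (Fin 2) (ZMod (ℓ^(f+1+1))) := Matrix.of A0 with hAdef
  have hkval2 : k.val = 1 + (ℓ : ZMod (ℓ^(f+1+1)))^(f+1) • A := by
    ext i j
    have hAij := hA i j
    simp only [Matrix.sub_apply] at hAij
    simp only [Matrix.add_apply, Matrix.smul_apply, smul_eq_mul, hAdef, Matrix.of_apply]
    linear_combination hAij
  -- build y at level f+1
  set Abar : Matrix (Fin 2) (Fin 2) (ZMod (ℓ^(f+1))) :=
    (RingHom.mapMatrix (ZMod.castHom (pow_dvd_pow ℓ (Nat.le_succ (f+1))) (ZMod (ℓ^(f+1))))) A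
    with hAbar
  have hdet : IsUnit (Matrix.det (1 + (ℓ : ZMod (ℓ^(f+1)))^f • Abar)) :=
    isUnit_one_add_pow_smul hℓp hf1 (by omega) _
  set y : GL (Fin 2) (ZMod (ℓ^(f+1))) := Matrix.GeneralLinearGroup.mk'' _ hdet with hy
  have hyval : y.val = 1 + (ℓ : ZMod (ℓ^(f+1)))^f • Abar := rfl
  have hyker : glMap (ZMod.castHom (pow_dvd_pow ℓ (Nat.le_succ f)) (ZMod (ℓ^f))) y = 1 := by
    apply Units.ext
    show (RingHom.mapMatrix (ZMod.castHom (pow_dvd_pow ℓ (Nat.le_succ f)) (ZMod (ℓ^f))))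
      (1 + (ℓ : ZMod (ℓ^(f+1)))^f • Abar) = 1
    rw [map_add, map_one, mapMatrix_pow_smul, pow_smul_eq_zero (le_refl f), add_zero]
  obtain ⟨g₀, hg₀G, hg₀proj, hg₀away⟩ := IH f (by omega) hfβ y hyker
  set z : GL (Fin 2) (ZMod (ℓ^(f+1+1))) := glMap (ZHat.proj (Pp ℓ (f+1+1))) g₀ with hz
  have hzcast : glMap (ZMod.castHom (pow_dvd_pow ℓ (Nat.le_succ f.succ)) (ZMod (ℓ^(f+1)))) z = y := by
    rw [hz]
    exact (GLred_comp_castHom (Pp ℓ (f+1)) (Pp ℓ (f+1+1))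
      (pow_dvd_pow ℓ (Nat.le_succ f.succ)) g₀).trans hg₀proj
  have hzker : ∀ i j, ∃ c,
      (z.val - (1 + (ℓ : ZMod (ℓ^(f+1+1)))^f • A)) i j = (ℓ : ZMod (ℓ^(f+1+1)))^(f+1) * c := by
    intro i j
    apply zmod_pow_ker hℓp.pos
    have hmapz : (RingHom.mapMatrix (ZMod.castHom (pow_dvd_pow ℓ (Nat.le_succ (f+1)))
        (ZMod (ℓ^(f+1))))) (z.val - (1 + (ℓ : ZMod (ℓ^(f+1+1)))^f • A)) = 0 := by
      rw [map_sub, map_add, map_one, mapMatrix_pow_smul]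
      have : (RingHom.mapMatrix (ZMod.castHom (pow_dvd_pow ℓ (Nat.le_succ (f+1)))
          (ZMod (ℓ^(f+1))))) z.val = y.val := congrArg Units.val hzcast
      rw [this, hyval, hAbar, sub_self]
    calc ZMod.castHom (pow_dvd_pow ℓ (Nat.le_succ (f+1))) (ZMod (ℓ^(f+1)))
          ((z.val - (1 + (ℓ : ZMod (ℓ^(f+1+1)))^f • A)) i j)
        = (RingHom.mapMatrix (ZMod.castHom (pow_dvd_pow ℓ (Nat.le_succ (f+1)))
          (ZMod (ℓ^(f+1)))) (z.val - (1 + (ℓ : ZMod (ℓ^(f+1+1)))^f • A))) i j := rfl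
      _ = 0 := by rw [hmapz]; rfl
  choose C0 hC using hzker
  set C : Matrix (Fin 2) (Fin 2) (ZMod (ℓ^(f+1+1))) := Matrix.of C0 with hCdef
  have hzval : z.val = 1 + (ℓ : ZMod (ℓ^(f+1+1)))^f • (A + (ℓ : ZMod (ℓ^(f+1+1))) • C) := by
    ext i j
    have hCij := hC i j
    simp only [Matrix.sub_apply, Matrix.add_apply, Matrix.smul_apply, smul_eq_mul, hCdef,
      Matrix.of_apply, hAdef] at hCij ⊢
    linear_combination hCij
  have hsc : (ℓ : ZMod (ℓ^(f+1+1)))^(f+1) * (ℓ : ZMod (ℓ^(f+1+1))) = 0 := by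
    have : ((ℓ^(f+1+1) : ℕ) : ZMod (ℓ^(f+1+1))) = 0 := ZMod.natCast_self _
    push_cast at this
    rw [← pow_succ]
    exact this
  have hzpow : (z^ℓ).val = k.val := by
    have hv : (z^ℓ).val = z.val^ℓ := rfl
    rw [hv, hzval]
    have hkey := key_pow hℓp hfα (A + (ℓ : ZMod (ℓ^(f+1+1))) • C)
    rw [hkey, hkval2, smul_add, smul_smul, hsc, zero_smul, add_zero]
  refine ⟨g₀^ℓ, pow_mem hg₀G ℓ, ?_, by rw [map_pow, hg₀away, one_pow]⟩
  apply Units.ext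
  rw [map_pow, ← hz]
  exact hzpow
set_option synthInstance.maxHeartbeats 1000000 in
theorem main_claim (ℓ : ℕ) [Fact ℓ.Prime] (G : Subgroup (GL (Fin 2) ZHat)) (β : ℕ)
    (h0 : ∀ e : ℕ, β ≤ e → e ≤ max β (alphaExp ℓ) → ∀ k : GL (Fin 2) (ZMod (ℓ^(e+1))),
        glMap (ZMod.castHom (pow_dvd_pow ℓ (Nat.le_succ e)) (ZMod (ℓ^e))) k = 1 →
        ∃ g ∈ G, glMap (ZHat.proj (Pp ℓ (e+1))) g = k ∧ glMap (ZHat.away ℓ) g = 1) :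
    ∀ (e : ℕ) (he : β ≤ e), ∀ k : GL (Fin 2) (ZMod (ℓ^e)),
        glMap (ZMod.castHom (pow_dvd_pow ℓ he) (ZMod (ℓ^β))) k = 1 →
        ∃ g ∈ G, glMap (ZHat.proj (Pp ℓ e)) g = k ∧ glMap (ZHat.away ℓ) g = 1 := by
  intro e he
  induction e, he using Nat.le_induction with
  | base =>
    intro k hk
    have hk1 : k = 1 := by
      apply Units.ext
      apply Matrix.ext
      intro i j
      have hentry := Matrix.ext_iff.mpr (congrArg Units.val hk) i j
      simpa [ZMod.castHom_apply, ZMod.cast_id] using hentry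
    refine ⟨1, one_mem G, ?_, map_one _⟩
    rw [map_one]
    exact hk1.symm
  | succ e he IH =>
    intro k hk
    set kk := glMap (ZMod.castHom (pow_dvd_pow ℓ (Nat.le_succ e)) (ZMod (ℓ^e))) k with hkk
    have hkkβ : glMap (ZMod.castHom (pow_dvd_pow ℓ he) (ZMod (ℓ^β))) kk = 1 := by
      rw [hkk, ← MonoidHom.comp_apply, ← Matrix.GeneralLinearGroup.map_comp,
        ZMod.castHom_comp]
      exact hk
    obtain ⟨g₀, hg₀G, hg₀proj, hg₀away⟩ := IH kk hkkβ
    set u : GL (Fin 2) (ZMod (ℓ^(e+1))) := glMap (ZHat.proj (Pp ℓ (e+1))) g₀ with hu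
    have hucast : glMap (ZMod.castHom (pow_dvd_pow ℓ (Nat.le_succ e)) (ZMod (ℓ^e))) u = kk := by
      rw [hu]
      exact (GLred_comp_castHom (Pp ℓ e) (Pp ℓ (e+1))
        (pow_dvd_pow ℓ (Nat.le_succ e)) g₀).trans hg₀proj
    have hlayer : glMap (ZMod.castHom (pow_dvd_pow ℓ (Nat.le_succ e)) (ZMod (ℓ^e))) (k * u⁻¹) = 1 := by
      rw [map_mul, map_inv, hucast, ← hkk, mul_inv_cancel]
    obtain ⟨g₁, hg₁G, hg₁proj, hg₁away⟩ := layer_all ℓ G β h0 e he (k * u⁻¹) hlayer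
    refine ⟨g₁ * g₀, mul_mem hg₁G hg₀G, ?_, by rw [map_mul, hg₁away, hg₀away, one_mul]⟩
    rw [map_mul, hg₁proj, ← hu]; exact inv_mul_cancel_right k u
lemma GL_crt {a b : ℕ} (ha : 0 < a) (hb : 0 < b) (hab : Nat.Coprime a b)
    {x y : GL (Fin 2) (ZMod (a*b))}
    (h1 : glMap (ZMod.castHom (dvd_mul_right a b) (ZMod a)) x
        = glMap (ZMod.castHom (dvd_mul_right a b) (ZMod a)) y)
    (h2 : glMap (ZMod.castHom (dvd_mul_left b a) (ZMod b)) x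
        = glMap (ZMod.castHom (dvd_mul_left b a) (ZMod b)) y) : x = y := by
  apply Units.ext
  apply Matrix.ext
  intro i j
  apply zmod_pair_inj ha hb hab
  · have h := Matrix.ext_iff.mpr (congrArg Units.val h1) i j
    rw [Matrix.GeneralLinearGroup.map_apply, Matrix.GeneralLinearGroup.map_apply] at h
    exact h
  · have h := Matrix.ext_iff.mpr (congrArg Units.val h2) i j
    rw [Matrix.GeneralLinearGroup.map_apply, Matrix.GeneralLinearGroup.map_apply] at h
    exact h

set_option synthInstance.maxHeartbeats 1000000 in
set_option maxHeartbeats 1000000 in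
theorem statement1' (ℓ : ℕ) [Fact ℓ.Prime] (G : Subgroup (GL (Fin 2) ZHat))
    (hGclosed : IsClosed (G : Set (GL (Fin 2) ZHat))) (β : ℕ)
    (h : ∀ γ : ℕ, β ≤ γ → γ ≤ max β (alphaExp ℓ) →
      ∀ k ∈ (glMap (ZMod.castHom (pow_dvd_pow ℓ (Nat.le_succ γ)) (ZMod (ℓ ^ γ)))).ker,
        ∃ g ∈ G,
          glMap ((PadicInt.toZModPow (p := ℓ) (γ + 1)).comp (ZHat.toPadicInt ℓ)) g = k ∧
          glMap (ZHat.away ℓ) g = 1) :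
    ∀ g : GL (Fin 2) ZHat,
      glMap ((PadicInt.toZModPow (p := ℓ) β).comp (ZHat.toPadicInt ℓ)) g = 1 →
      glMap (ZHat.away ℓ) g = 1 → g ∈ G := by
  intro g hpadic haway
  have hprime : ℓ.Prime := Fact.out
  have h0 : ∀ e : ℕ, β ≤ e → e ≤ max β (alphaExp ℓ) → ∀ k : GL (Fin 2) (ZMod (ℓ^(e+1))),
      glMap (ZMod.castHom (pow_dvd_pow ℓ (Nat.le_succ e)) (ZMod (ℓ^e))) k = 1 →
      ∃ g' ∈ G, glMap (ZHat.proj (Pp ℓ (e+1))) g' = k ∧ glMap (ZHat.away ℓ) g' = 1 := by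
    intro e he1 he2 k hk
    obtain ⟨g', hg'G, hg'p, hg'a⟩ := h e he1 he2 k (MonoidHom.mem_ker.mpr hk)
    exact ⟨g', hg'G, (glMap_padic_proj (e+1) g').symm.trans hg'p, hg'a⟩
  apply mem_of_GLred G hGclosed
  intro N
  set v := (N:ℕ).factorization ℓ with hv
  have hNpos : 0 < (N:ℕ) := N.pos
  set m₀ := (N:ℕ) / ℓ^v with hm₀
  have hm₀pos : 0 < m₀ := Nat.ordCompl_pos ℓ hNpos.ne'
  have hNfact : ℓ^v * m₀ = (N:ℕ) := Nat.ordProj_mul_ordCompl_eq_self (N:ℕ) ℓ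
  have hℓm₀ : ¬ ℓ ∣ m₀ := Nat.not_dvd_ordCompl hprime hNpos.ne'
  set e := max v β with he
  have hβe : β ≤ e := le_max_right v β
  set m : ℕ+ := ⟨m₀, hm₀pos⟩ with hm
  set N' : ℕ+ := Pp ℓ e * m with hN'
  have hNdvdN' : (N:ℕ) ∣ (N':ℕ) := by
    show (N:ℕ) ∣ ℓ^e * m₀
    rw [← hNfact]
    exact Nat.mul_dvd_mul (pow_dvd_pow ℓ (le_max_left v β)) dvd_rfl
  set k : GL (Fin 2) (ZMod (ℓ^e)) := glMap (ZHat.proj (Pp ℓ e)) g with hkdef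
  have hkβ : glMap (ZMod.castHom (pow_dvd_pow ℓ hβe) (ZMod (ℓ^β))) k = 1 :=
    (GLred_comp_castHom (Pp ℓ β) (Pp ℓ e) (pow_dvd_pow ℓ hβe) g).trans
      ((glMap_padic_proj β g).symm.trans hpadic)
  obtain ⟨g', hg'G, hg'proj, hg'away⟩ := main_claim ℓ G β h0 e hβe k hkβ
  refine ⟨g', hg'G, ?_⟩
  have hcop : Nat.Coprime (ℓ^e) m₀ :=
    Nat.Coprime.pow_left e ((Nat.Prime.coprime_iff_not_dvd hprime).mpr hℓm₀)
  have hred : GLred N' g' = GLred N' g := by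
    refine GL_crt (a := ℓ^e) (b := m₀) (pow_pos hprime.pos e) hm₀pos hcop ?_ ?_
    · exact ((GLred_comp_castHom (Pp ℓ e) N' (dvd_mul_right (ℓ^e) m₀) g').trans hg'proj).trans
        (((GLred_comp_castHom (Pp ℓ e) N' (dvd_mul_right (ℓ^e) m₀) g).trans hkdef.symm).symm)
    · exact ((GLred_comp_castHom m N' (dvd_mul_left m₀ (ℓ^e)) g').trans
        (GLred_away_eq_one m hℓm₀ hg'away)).trans
        (((GLred_comp_castHom m N' (dvd_mul_left m₀ (ℓ^e)) g).trans
        (GLred_away_eq_one m hℓm₀ haway)).symm)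
  have hfin1 := GLred_comp_castHom N N' hNdvdN' g'
  have hfin2 := GLred_comp_castHom N N' hNdvdN' g
  rw [← hfin1, hred, hfin2]

/-- Let `G ⊆ GL₂(Ẑ)` be a closed subgroup, `ℓ` a prime and `β ≥ 0`.  Identify
`GL₂(Ẑ) ≅ GL₂(ℤ_ℓ) × GL₂(ℤ_(ℓ))`.  If for every `γ` with `β ≤ γ ≤ max {β, α_ℓ}`
one has `ker(GL₂(ℤ/ℓ^{γ+1}ℤ) → GL₂(ℤ/ℓ^γℤ)) × {1} ⊆ (π_{ℓ^∞,ℓ^{γ+1}} × id)(G)`,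
then `ker(GL₂(ℤ_ℓ) → GL₂(ℤ/ℓ^βℤ)) × {1} ⊆ G`. -/
theorem statement1 (ℓ : ℕ) [Fact ℓ.Prime] (G : Subgroup (GL (Fin 2) ZHat))
    (hGclosed : IsClosed (G : Set (GL (Fin 2) ZHat))) (β : ℕ)
    (h : ∀ γ : ℕ, β ≤ γ → γ ≤ max β (alphaExp ℓ) →
      ∀ k ∈ (glMap (ZMod.castHom (pow_dvd_pow ℓ (Nat.le_succ γ)) (ZMod (ℓ ^ γ)))).ker,
        ∃ g ∈ G,
          glMap ((PadicInt.toZModPow (p := ℓ) (γ + 1)).comp (ZHat.toPadicInt ℓ)) g = k ∧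
          glMap (ZHat.away ℓ) g = 1) :
    ∀ g : GL (Fin 2) ZHat,
      glMap ((PadicInt.toZModPow (p := ℓ) β).comp (ZHat.toPadicInt ℓ)) g = 1 →
      glMap (ZHat.away ℓ) g = 1 → g ∈ G := by
  exact statement1' ℓ G hGclosed β h
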